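/- Consider a sequence of morphisms of complex projective spaces P^{i_1} → P^{i_2} → ⋯ with maps φ_N: P^{i_N} → P^{i_{N+1}}, and let E = {E_N} be a vector bundle on this system (so φ_N^* E_{N+1} ≅ E_N). If deg φ_N > 1 for infinitely many N, then for every N and every q ≥ 1 the Chern class c_q(E_N) ∈ H^{2q}(P^{i_N}, Z) ≅ Z vanishes. -/

import Mathlib

/-- Chern classes of a vector bundle on a twisted projective ind-space vanish.
Here `deg N` is the degree of the morphism `φ_N : P^{i_N} → P^{i_{N+1}}`, and
`c q N ∈ H^{2q}(P^{i_N}, ℤ) ≅ ℤ` is the `q`-th Chern class of `E_N`.  Since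
`φ_N^* E_{N+1} ≅ E_N` and `φ_N^*` acts on `H^{2q} ≅ ℤ` as multiplication by `(deg N)^q`,
we have `c q N = (deg N)^q * c q (N+1)`.  If infinitely many degrees exceed `1`, all
Chern classes `c q N` with `q ≥ 1` vanish. -/
theorem chern_classes_vanish_on_twisted_ind_space
    (deg : ℕ → ℕ) (hdeg : ∀ N, 1 ≤ deg N) (hinf : {N | 1 < deg N}.Infinite)
    (c : ℕ → ℕ → ℤ)
    (hc : ∀ q N, c q N = (deg N : ℤ) ^ q * c q (N + 1)) :
    ∀ q N, 1 ≤ q → c q N = 0 := by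
  intro q N hq
  -- composition formula
  have hprod : ∀ M, N ≤ M →
      c q N = (∏ k ∈ Finset.Ico N M, (deg k : ℤ)) ^ q * c q M := by
    intro M hM
    induction M, hM using Nat.le_induction with
    | base => simp
    | succ M hM ih =>
      rw [ih, hc q M, Finset.prod_Ico_succ_top hM, mul_pow, mul_assoc]
  -- arbitrarily large partial products
  have h2 : ∀ b : ℕ, ∃ M, N ≤ M ∧ 2 ^ b ≤ ∏ k ∈ Finset.Ico N M, deg k := by
    intro b
    induction b with
    | zero => exact ⟨N, le_rfl, by simp⟩
    | succ b ih =>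
      obtain ⟨M, hNM, hle⟩ := ih
      obtain ⟨m, hm, hMm⟩ := hinf.exists_gt M
      refine ⟨m + 1, le_trans hNM (by omega), ?_⟩
      rw [← Finset.prod_Ico_consecutive _ hNM (by omega : M ≤ m + 1), pow_succ]
      have hQ : 2 ≤ ∏ k ∈ Finset.Ico M (m + 1), deg k := by
        have hmem : m ∈ Finset.Ico M (m + 1) := by
          simp [Finset.mem_Ico]; omega
        calc 2 ≤ deg m := hm
        _ ≤ ∏ k ∈ Finset.Ico M (m + 1), deg k :=
            Finset.single_le_prod' (fun i _ => hdeg i) hmem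
      exact Nat.mul_le_mul hle hQ
  -- conclude
  by_contra h
  obtain ⟨M, hNM, hle⟩ := h2 (c q N).natAbs
  set P := ∏ k ∈ Finset.Ico N M, deg k with hP
  have hdvd : (P : ℤ) ^ q ∣ c q N := by
    rw [hprod M hNM]
    refine Dvd.dvd.mul_right ?_ _
    have : ((P : ℤ)) = ∏ k ∈ Finset.Ico N M, (deg k : ℤ) := by push_cast [hP]; rfl
    rw [this]
  have hle2 : (P : ℤ) ^ q ≤ |c q N| := Int.le_of_dvd (abs_pos.mpr h) ((dvd_abs _ _).mpr hdvd)
  have hle3 : P ^ q ≤ (c q N).natAbs := by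
    rw [Int.abs_eq_natAbs] at hle2; exact_mod_cast hle2
  have hle4 : P ≤ P ^ q := Nat.le_self_pow (by omega) P
  have hlt : (c q N).natAbs < 2 ^ (c q N).natAbs := Nat.lt_two_pow_self
  omega
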